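/- Let ε ≥ 0, κ ≥ 0, c ∈ ℝ³, and let τ, σ ⊂ ℝ³ be axis-parallel boxes with dist(τ,σ) > 0. Suppose that for all d, p ∈ ℝ³ satisfying 2‖p‖ ≤ max{diam τ, diam σ} and d − tp ∈ τ−σ := {x−y : x ∈ τ, y ∈ σ} for all t ∈ [−1,1], the univariate interpolation error satisfies ‖g_dp − 𝕀[g_dp]‖_{∞,[−1,1]} ≤ ε, where g_dp(t) := exp(iκ(‖d−tp‖ − ⟨d−tp, c⟩))/(4π‖d−tp‖). Then the directional approximation error satisfies ‖g − g̃_{τσ}‖_{∞,τ×σ} ≤ 6 Λ_m⁵ ε. -/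

import Mathlib

open Complex Set

/-- The Euclidean norm on `ℝⁿ`. -/
noncomputable def euclNorm {n : ℕ} (x : Fin n → ℝ) : ℝ := Real.sqrt (∑ j, (x j) ^ 2)

/-- The axis-parallel box `[a₁,b₁] × ⋯ × [a_n,b_n]`. -/
def boxSet {n : ℕ} (a b : Fin n → ℝ) : Set (Fin n → ℝ) := {x | ∀ ι, x ι ∈ Set.Icc (a ι) (b ι)}

/-- The Euclidean diameter of a set. -/
noncomputable def euclDiam {n : ℕ} (s : Set (Fin n → ℝ)) : ℝ :=
  sSup {r : ℝ | ∃ x ∈ s, ∃ y ∈ s, r = euclNorm (x - y)}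

/-- The Euclidean distance between two sets. -/
noncomputable def euclSetDist {n : ℕ} (s t : Set (Fin n → ℝ)) : ℝ :=
  sInf {r : ℝ | ∃ x ∈ s, ∃ y ∈ t, r = euclNorm (x - y)}

/-- Lagrange polynomial `L_ν(z) = ∏_{μ≠ν} (z−ξ_μ)/(ξ_ν−ξ_μ)` for nodes `ξ` on `[−1,1]`. -/
noncomputable def lagrangeC {m : ℕ} (ξ : Fin (m + 1) → ℝ) (ν : Fin (m + 1)) (z : ℂ) : ℂ :=
  ∏ μ ∈ Finset.univ.erase ν, (z - (ξ μ : ℂ)) / ((ξ ν : ℂ) - (ξ μ : ℂ))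

/-- Interpolation operator `𝕀[f] = Σ_ν f(ξ_ν)·L_ν` on `[−1,1]`. -/
noncomputable def interpC {m : ℕ} (ξ : Fin (m + 1) → ℝ) (f : ℝ → ℂ) (x : ℝ) : ℂ :=
  ∑ ν, f (ξ ν) * lagrangeC ξ ν (x : ℂ)

/-- The maximum norm `‖f‖_{∞,s}` of a function on a set. -/
noncomputable def supNormOn (f : ℝ → ℂ) (s : Set ℝ) : ℝ :=
  sSup ((fun x => ‖f x‖) '' s)

/-- The Lebesgue constant `Λ_m = sup{‖𝕀[f]‖_{∞,[−1,1]}/‖f‖_{∞,[−1,1]} : f ∈ C[−1,1] \ {0}}`. -/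
noncomputable def lebesgueConst {m : ℕ} (ξ : Fin (m + 1) → ℝ) : ℝ :=
  sSup {r : ℝ | ∃ f : ℝ → ℂ, ContinuousOn f (Set.Icc (-1) 1) ∧
    (∃ x ∈ Set.Icc (-1 : ℝ) 1, f x ≠ 0) ∧
    r = supNormOn (interpC ξ f) (Set.Icc (-1) 1) / supNormOn f (Set.Icc (-1) 1)}

/-- The affine map `Φ_{[a,b]}(t) = (b+a)/2 + (b−a)/2·t` taking `[−1,1]` to `[a,b]`. -/
noncomputable def phiAB (a b t : ℝ) : ℝ := (b + a) / 2 + (b - a) / 2 * t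

/-- The inverse `Φ_{[a,b]}^{−1}(x) = (2x − a − b)/(b − a)`. -/
noncomputable def phiInvAB (a b x : ℝ) : ℝ := (2 * x - (a + b)) / (b - a)

/-- Transformed tensor interpolation point `ξ_{B,ν}` of the box `[a₁,b₁]×⋯×[a_n,b_n]`. -/
noncomputable def xiPoint {n m : ℕ} (ξ : Fin (m + 1) → ℝ) (a b : Fin n → ℝ)
    (ν : Fin n → Fin (m + 1)) : Fin n → ℝ :=
  fun ι => phiAB (a ι) (b ι) (ξ (ν ι))

/-- Transformed tensor Lagrange function `L_{B,ν}(x) = ∏_ι L_{ν_ι}(Φ_{[a_ι,b_ι]}^{−1}(x_ι))`. -/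
noncomputable def lagTensor {n m : ℕ} (ξ : Fin (m + 1) → ℝ) (a b : Fin n → ℝ)
    (ν : Fin n → Fin (m + 1)) (x : Fin n → ℝ) : ℂ :=
  ∏ ι, lagrangeC ξ (ν ι) ((phiInvAB (a ι) (b ι) (x ι) : ℝ) : ℂ)

/-- The 3D Helmholtz kernel `g(x,y) = exp(iκ‖x−y‖)/(4π‖x−y‖)`. -/
noncomputable def helmholtz3D (κ : ℝ) (x y : Fin 3 → ℝ) : ℂ :=
  Complex.exp (Complex.I * (κ : ℂ) * (euclNorm (x - y) : ℂ)) /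
    (4 * (Real.pi : ℂ) * (euclNorm (x - y) : ℂ))

/-- The directionally modified kernel `g_c(x,y) = g(x,y)·exp(−iκ⟨x−y,c⟩)`. -/
noncomputable def helmholtz3Dc (κ : ℝ) (c : Fin 3 → ℝ) (x y : Fin 3 → ℝ) : ℂ :=
  helmholtz3D κ x y * Complex.exp (-(Complex.I * (κ : ℂ) * ((∑ j, (x j - y j) * c j : ℝ) : ℂ)))

/-- The directional approximation
`g̃_{τσ}(x,y) = exp(iκ⟨x−y,c⟩)·𝕀_{τ×σ}[g_c](x,y)` with tensor interpolation on `τ×σ`. -/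
noncomputable def gTilde (m : ℕ) (ξ : Fin (m + 1) → ℝ) (κ : ℝ) (c : Fin 3 → ℝ)
    (aτ bτ aσ bσ : Fin 3 → ℝ) (x y : Fin 3 → ℝ) : ℂ :=
  Complex.exp (Complex.I * (κ : ℂ) * ((∑ j, (x j - y j) * c j : ℝ) : ℂ)) *
    ∑ ν : Fin 3 → Fin (m + 1), ∑ μ : Fin 3 → Fin (m + 1),
      helmholtz3Dc κ c (xiPoint ξ aτ bτ ν) (xiPoint ξ aσ bσ μ) *
        lagTensor ξ aτ bτ ν x * lagTensor ξ aσ bσ μ y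

section Aux
variable {m : ℕ}

lemma lagrangeC_eq_eval (ξ : Fin (m + 1) → ℝ) (ν : Fin (m + 1)) (z : ℂ) :
    lagrangeC ξ ν z = Polynomial.eval z (Lagrange.basis Finset.univ (fun μ => (ξ μ : ℂ)) ν) := by
  rw [Lagrange.basis, Polynomial.eval_prod, lagrangeC]
  refine Finset.prod_congr rfl fun μ hμ => ?_
  rw [Lagrange.basisDivisor]
  simp [div_eq_inv_mul]

lemma sum_lagrangeC (ξ : Fin (m + 1) → ℝ) (hinj : Function.Injective ξ) (z : ℂ) :
    ∑ ν, lagrangeC ξ ν z = 1 := by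
  have hinj' : Set.InjOn (fun μ => (ξ μ : ℂ)) (Finset.univ : Finset (Fin (m+1))) := by
    intro a _ b _ h
    simp only [] at h; exact hinj (Complex.ofReal_injective h)
  calc ∑ ν, lagrangeC ξ ν z
      = Polynomial.eval z (∑ ν, Lagrange.basis Finset.univ (fun μ => (ξ μ : ℂ)) ν) := by
        rw [Polynomial.eval_finset_sum]; simp [lagrangeC_eq_eval]
    _ = 1 := by rw [Lagrange.sum_basis hinj' ⟨0, Finset.mem_univ 0⟩, Polynomial.eval_one]

lemma continuous_lagrangeC (ξ : Fin (m + 1) → ℝ) (ν : Fin (m + 1)) :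
    Continuous fun t : ℝ => lagrangeC ξ ν (t : ℂ) := by
  unfold lagrangeC
  refine continuous_finset_prod _ fun μ _ => ?_
  exact (Complex.continuous_ofReal.sub continuous_const).div_const _

lemma continuous_interpC (ξ : Fin (m + 1) → ℝ) (f : ℝ → ℂ) :
    Continuous (interpC ξ f) := by
  unfold interpC
  exact continuous_finset_sum _ fun ν _ => (continuous_const.mul (continuous_lagrangeC ξ ν))

end Aux
section Leb
variable {m : ℕ}

lemma supNormOn_ge (f : ℝ → ℂ) (hf : ContinuousOn f (Set.Icc (-1:ℝ) 1)) {t : ℝ}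
    (ht : t ∈ Set.Icc (-1:ℝ) 1) : ‖f t‖ ≤ supNormOn f (Set.Icc (-1) 1) := by
  have hb : BddAbove ((fun x => ‖f x‖) '' Set.Icc (-1:ℝ) 1) :=
    (isCompact_Icc.image_of_continuousOn (continuous_norm.comp_continuousOn hf)).bddAbove
  exact le_csSup hb ⟨t, ht, rfl⟩

lemma supNormOn_le (f : ℝ → ℂ) {M : ℝ} (hM : 0 ≤ M)
    (h : ∀ t ∈ Set.Icc (-1:ℝ) 1, ‖f t‖ ≤ M) :
    supNormOn f (Set.Icc (-1) 1) ≤ M := by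
  refine Real.sSup_le ?_ hM
  rintro r ⟨t, ht, rfl⟩; exact h t ht

lemma supNormOn_nonneg (f : ℝ → ℂ) : 0 ≤ supNormOn f (Set.Icc (-1:ℝ) 1) := by
  have : (0:ℝ) ≤ ‖f 0‖ := norm_nonneg _
  by_cases hb : BddAbove ((fun x => ‖f x‖) '' Set.Icc (-1:ℝ) 1)
  · exact le_trans this (le_csSup hb ⟨0, by norm_num, rfl⟩)
  · rw [supNormOn, Real.sSup_of_not_bddAbove hb]

/-- bound used for BddAbove of the Lebesgue set -/
noncomputable def lebBound (ξ : Fin (m + 1) → ℝ) : ℝ :=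
  ∑ ν, supNormOn (fun t => lagrangeC ξ ν (t : ℂ)) (Set.Icc (-1) 1)

lemma bddAbove_lebSet (ξ : Fin (m + 1) → ℝ) (hξ : ∀ ν, ξ ν ∈ Set.Icc (-1:ℝ) 1) :
    BddAbove {r : ℝ | ∃ f : ℝ → ℂ, ContinuousOn f (Set.Icc (-1) 1) ∧
      (∃ x ∈ Set.Icc (-1 : ℝ) 1, f x ≠ 0) ∧
      r = supNormOn (interpC ξ f) (Set.Icc (-1) 1) / supNormOn f (Set.Icc (-1) 1)} := by
  refine ⟨lebBound ξ, ?_⟩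
  rintro r ⟨f, hf, ⟨x₀, hx₀, hfx₀⟩, rfl⟩
  have hpos : 0 < supNormOn f (Set.Icc (-1) 1) :=
    lt_of_lt_of_le (norm_pos_iff.mpr hfx₀) (supNormOn_ge f hf hx₀)
  rw [div_le_iff₀ hpos]
  have hlbnn : 0 ≤ lebBound ξ := Finset.sum_nonneg fun ν _ => supNormOn_nonneg _
  refine supNormOn_le _ (mul_nonneg hlbnn hpos.le) fun t ht => ?_
  calc ‖interpC ξ f t‖ ≤ ∑ ν, ‖f (ξ ν)‖ * ‖lagrangeC ξ ν (t:ℂ)‖ := by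
        refine le_trans (norm_sum_le _ _) (le_of_eq ?_)
        exact Finset.sum_congr rfl fun ν _ => norm_mul _ _
    _ ≤ ∑ ν, supNormOn f (Set.Icc (-1) 1) * supNormOn (fun t => lagrangeC ξ ν (t : ℂ)) (Set.Icc (-1) 1) := by
        refine Finset.sum_le_sum fun ν _ => mul_le_mul (supNormOn_ge f hf (hξ ν))
          (supNormOn_ge _ (continuous_lagrangeC ξ ν).continuousOn ht) (norm_nonneg _) hpos.le
    _ = lebBound ξ * supNormOn f (Set.Icc (-1) 1) := by rw [← Finset.mul_sum, lebBound, mul_comm]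

lemma one_le_lebesgueConst (ξ : Fin (m + 1) → ℝ) (hξ : ∀ ν, ξ ν ∈ Set.Icc (-1:ℝ) 1)
    (hinj : Function.Injective ξ) : 1 ≤ lebesgueConst ξ := by
  have hmem : (1:ℝ) ∈ {r : ℝ | ∃ f : ℝ → ℂ, ContinuousOn f (Set.Icc (-1) 1) ∧
      (∃ x ∈ Set.Icc (-1 : ℝ) 1, f x ≠ 0) ∧
      r = supNormOn (interpC ξ f) (Set.Icc (-1) 1) / supNormOn f (Set.Icc (-1) 1)} := by
    refine ⟨fun _ => 1, continuousOn_const, ⟨0, by norm_num, one_ne_zero⟩, ?_⟩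
    have h1 : interpC ξ (fun _ => (1:ℂ)) = fun t => 1 := by
      funext t; rw [interpC]; simp [sum_lagrangeC ξ hinj]
    have h2 : supNormOn (fun _ => (1:ℂ)) (Set.Icc (-1) 1) = 1 := by
      have himg : (fun x : ℝ => ‖(fun _ : ℝ => (1:ℂ)) x‖) '' Set.Icc (-1:ℝ) 1 = {1} := by
        simp only [norm_one]
        exact Set.Nonempty.image_const ⟨0, by norm_num⟩ 1
      rw [supNormOn, himg, csSup_singleton]
    rw [h1, h2]; norm_num
  exact le_csSup (bddAbove_lebSet ξ hξ) hmem

lemma interp_abs_le (ξ : Fin (m + 1) → ℝ) (hξ : ∀ ν, ξ ν ∈ Set.Icc (-1:ℝ) 1)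
    (hinj : Function.Injective ξ) (f : ℝ → ℂ) (hf : ContinuousOn f (Set.Icc (-1) 1))
    {M : ℝ} (hM : 0 ≤ M) (hfM : ∀ t ∈ Set.Icc (-1:ℝ) 1, ‖f t‖ ≤ M)
    {s : ℝ} (hs : s ∈ Set.Icc (-1:ℝ) 1) :
    ‖interpC ξ f s‖ ≤ lebesgueConst ξ * M := by
  have hΛ1 : 1 ≤ lebesgueConst ξ := one_le_lebesgueConst ξ hξ hinj
  by_cases hz : ∀ t ∈ Set.Icc (-1:ℝ) 1, f t = 0
  · have : interpC ξ f s = 0 := by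
      rw [interpC]; refine Finset.sum_eq_zero fun ν _ => by rw [hz (ξ ν) (hξ ν), zero_mul]
    rw [this, norm_zero]; positivity
  · push_neg at hz
    obtain ⟨x₀, hx₀, hfx₀⟩ := hz
    have hpos : 0 < supNormOn f (Set.Icc (-1) 1) :=
      lt_of_lt_of_le (norm_pos_iff.mpr hfx₀) (supNormOn_ge f hf hx₀)
    have hratio : supNormOn (interpC ξ f) (Set.Icc (-1) 1) / supNormOn f (Set.Icc (-1) 1)
        ≤ lebesgueConst ξ :=
      le_csSup (bddAbove_lebSet ξ hξ) ⟨f, hf, ⟨x₀, hx₀, hfx₀⟩, rfl⟩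
    have h1 : ‖interpC ξ f s‖ ≤ supNormOn (interpC ξ f) (Set.Icc (-1) 1) :=
      supNormOn_ge _ (continuous_interpC ξ f).continuousOn hs
    have h2 : supNormOn (interpC ξ f) (Set.Icc (-1) 1) ≤ lebesgueConst ξ * supNormOn f (Set.Icc (-1) 1) := by
      rw [div_le_iff₀ hpos] at hratio; exact hratio
    have h3 : supNormOn f (Set.Icc (-1) 1) ≤ M := supNormOn_le f hM hfM
    calc ‖interpC ξ f s‖ ≤ lebesgueConst ξ * supNormOn f (Set.Icc (-1) 1) :=
          le_trans h1 h2
      _ ≤ lebesgueConst ξ * M := by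
          exact mul_le_mul_of_nonneg_left h3 (le_trans zero_le_one hΛ1)

end Leb
section Geom
variable {m n : ℕ}

lemma phiAB_mem {A B : ℝ} (hAB : A ≤ B) {t : ℝ} (ht : t ∈ Set.Icc (-1:ℝ) 1) :
    phiAB A B t ∈ Set.Icc A B := by
  obtain ⟨h1, h2⟩ := ht
  constructor <;> (rw [phiAB]; nlinarith)

lemma phiInvAB_mem {A B : ℝ} (hAB : A ≤ B) {u : ℝ} (hu : u ∈ Set.Icc A B) :
    phiInvAB A B u ∈ Set.Icc (-1:ℝ) 1 := by
  obtain ⟨h1, h2⟩ := hu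
  rcases eq_or_lt_of_le hAB with h | h
  · have : u = A := le_antisymm (h ▸ h2) h1
    rw [phiInvAB, this, ← h]
    norm_num
  · constructor
    · rw [phiInvAB, le_div_iff₀ (by linarith)]; linarith
    · rw [phiInvAB, div_le_one (by linarith)]; linarith

lemma phiAB_phiInvAB {A B : ℝ} (hAB : A ≤ B) {u : ℝ} (hu : u ∈ Set.Icc A B) :
    phiAB A B (phiInvAB A B u) = u := by
  obtain ⟨h1, h2⟩ := hu
  rcases eq_or_lt_of_le hAB with h | h
  · subst h
    have : u = A := le_antisymm h2 h1
    rw [phiAB, phiInvAB, this]; ring_nf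
  · have hne : B - A ≠ 0 := by linarith
    rw [phiAB, phiInvAB]; field_simp; ring

lemma tail_mem_boxSet {A B u : Fin (n+1) → ℝ} (h : u ∈ boxSet A B) :
    Fin.tail u ∈ boxSet (Fin.tail A) (Fin.tail B) := fun i => h i.succ

lemma cons_mem_boxSet {A B : Fin (n+1) → ℝ} {t : ℝ} {v : Fin n → ℝ}
    (ht : t ∈ Set.Icc (A 0) (B 0)) (hv : v ∈ boxSet (Fin.tail A) (Fin.tail B)) :
    Fin.cons t v ∈ boxSet A B := by
  intro ι
  refine Fin.cases ?_ (fun i => ?_) ι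
  · simpa using ht
  · simpa [Fin.tail] using hv i

lemma update_mem_boxSet {A B u : Fin n → ℝ} (h : u ∈ boxSet A B) {ι : Fin n} {t : ℝ}
    (ht : t ∈ Set.Icc (A ι) (B ι)) : Function.update u ι t ∈ boxSet A B := by
  intro j
  rcases eq_or_ne j ι with rfl | hj
  · simpa using ht
  · simpa [Function.update_apply, hj] using h j

lemma xiPoint_mem_boxSet (ξ : Fin (m+1) → ℝ) (hξ : ∀ ν, ξ ν ∈ Set.Icc (-1:ℝ) 1)
    {A B : Fin n → ℝ} (hAB : ∀ ι, A ι ≤ B ι) (ν : Fin n → Fin (m+1)) :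
    xiPoint ξ A B ν ∈ boxSet A B := fun ι => phiAB_mem (hAB ι) (hξ (ν ι))

lemma xiPoint_cons (ξ : Fin (m+1) → ℝ) (A B : Fin (n+1) → ℝ) (ν₀ : Fin (m+1))
    (ν' : Fin n → Fin (m+1)) :
    xiPoint ξ A B (Fin.cons ν₀ ν') =
      Fin.cons (phiAB (A 0) (B 0) (ξ ν₀)) (xiPoint ξ (Fin.tail A) (Fin.tail B) ν') := by
  funext i
  refine Fin.cases ?_ (fun j => ?_) i <;> simp [xiPoint, Fin.tail]

lemma continuous_phiAB (A B : ℝ) : Continuous (phiAB A B) := by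
  unfold phiAB; fun_prop

lemma continuous_consPhi (A B : Fin (n+1) → ℝ) (w : Fin n → ℝ) :
    Continuous (fun t : ℝ => (Fin.cons (phiAB (A 0) (B 0) t) w : Fin (n+1) → ℝ)) := by
  refine continuous_pi fun i => ?_
  refine Fin.cases ?_ (fun j => ?_) i
  · simpa using continuous_phiAB (A 0) (B 0)
  · simpa using continuous_const (y := w j)

lemma continuous_updatePhi (A B u : Fin n → ℝ) (ι : Fin n) :
    Continuous (fun t : ℝ => Function.update u ι (phiAB (A ι) (B ι) t)) := by
  refine continuous_pi fun j => ?_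
  rcases eq_or_ne j ι with rfl | hj
  · simpa using continuous_phiAB (A j) (B j)
  · simpa [Function.update_apply, hj] using continuous_const (y := u j)

lemma tensor_split (ξ : Fin (m+1) → ℝ) (A B : Fin (n+1) → ℝ) (H : (Fin (n+1) → ℝ) → ℂ)
    (u : Fin (n+1) → ℝ) :
    (∑ ν : Fin (n+1) → Fin (m+1), H (xiPoint ξ A B ν) *
        ∏ ι, lagrangeC ξ (ν ι) (phiInvAB (A ι) (B ι) (u ι)))
    = interpC ξ (fun t => ∑ ν' : Fin n → Fin (m+1),
        H (Fin.cons (phiAB (A 0) (B 0) t) (xiPoint ξ (Fin.tail A) (Fin.tail B) ν')) *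
        ∏ i, lagrangeC ξ (ν' i) (phiInvAB (Fin.tail A i) (Fin.tail B i) (Fin.tail u i)))
      (phiInvAB (A 0) (B 0) (u 0)) := by
  rw [interpC, ← Equiv.sum_comp (Fin.consEquiv (fun _ : Fin (n+1) => Fin (m+1))),
    Fintype.sum_prod_type]
  refine Finset.sum_congr rfl fun ν₀ _ => ?_
  rw [Finset.sum_mul]
  refine Finset.sum_congr rfl fun ν' _ => ?_
  show H (xiPoint ξ A B (Fin.cons ν₀ ν')) *
      ∏ ι, lagrangeC ξ ((Fin.cons ν₀ ν' : Fin (n+1) → Fin (m+1)) ι) (phiInvAB (A ι) (B ι) (u ι)) = _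
  rw [xiPoint_cons, Fin.prod_univ_succ]
  simp only [Fin.cons_zero, Fin.cons_succ, Fin.tail]
  ring

end Geom
section Induction
variable {m : ℕ}

lemma interpC_sub (ξ : Fin (m+1) → ℝ) (f g : ℝ → ℂ) (x : ℝ) :
    interpC ξ (fun t => f t - g t) x = interpC ξ f x - interpC ξ g x := by
  simp only [interpC, ← Finset.sum_sub_distrib, sub_mul]

lemma update_zero_eq_cons {n : ℕ} (u : Fin (n+1) → ℝ) (x : ℝ) :
    Function.update u 0 x = Fin.cons x (Fin.tail u) := by
  funext i
  refine Fin.cases ?_ (fun j => ?_) i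
  · simp
  · simp [Fin.tail, Function.update_apply, Fin.succ_ne_zero]

lemma continuous_cons_right {n : ℕ} (c : ℝ) :
    Continuous (fun v : Fin n → ℝ => (Fin.cons c v : Fin (n+1) → ℝ)) := by
  refine continuous_pi fun i => ?_
  refine Fin.cases ?_ (fun j => ?_) i
  · simpa using continuous_const (y := c)
  · simpa using continuous_apply j

lemma tensor_stab (ξ : Fin (m+1) → ℝ) (hξ : ∀ ν, ξ ν ∈ Set.Icc (-1:ℝ) 1)
    (hinj : Function.Injective ξ) :
    ∀ (n : ℕ) (A B : Fin n → ℝ), (∀ ι, A ι ≤ B ι) →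
      ∀ (G : (Fin n → ℝ) → ℂ), ContinuousOn G (boxSet A B) →
      ∀ (M : ℝ), 0 ≤ M → (∀ v ∈ boxSet A B, ‖G v‖ ≤ M) →
      ∀ u ∈ boxSet A B,
      ‖∑ ν : Fin n → Fin (m+1), G (xiPoint ξ A B ν) *
          ∏ ι, lagrangeC ξ (ν ι) (phiInvAB (A ι) (B ι) (u ι))‖
        ≤ (lebesgueConst ξ)^n * M := by
  intro n
  induction n with
  | zero =>
    intro A B _ G _ M _ hGM u hu
    have h1 : ∀ ν : Fin 0 → Fin (m+1), xiPoint ξ A B ν = u := fun ν => Subsingleton.elim _ _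
    simp only [Finset.univ_unique, Finset.sum_singleton, h1, Finset.univ_eq_empty,
      Finset.prod_empty, mul_one, pow_zero, one_mul]
    exact hGM u hu
  | succ n IH =>
    intro A B hAB G Gcont M hM hGM u hu
    have hΛ1 : 1 ≤ lebesgueConst ξ := one_le_lebesgueConst ξ hξ hinj
    have hΛ0 : 0 ≤ lebesgueConst ξ := le_trans zero_le_one hΛ1
    rw [tensor_split]
    have hs₀ : phiInvAB (A 0) (B 0) (u 0) ∈ Set.Icc (-1:ℝ) 1 := phiInvAB_mem (hAB 0) (hu 0)
    have htail : Fin.tail u ∈ boxSet (Fin.tail A) (Fin.tail B) := tail_mem_boxSet hu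
    have key : ∀ t ∈ Set.Icc (-1:ℝ) 1,
        ‖∑ ν' : Fin n → Fin (m+1),
          G (Fin.cons (phiAB (A 0) (B 0) t) (xiPoint ξ (Fin.tail A) (Fin.tail B) ν')) *
          ∏ i, lagrangeC ξ (ν' i) (phiInvAB (Fin.tail A i) (Fin.tail B i) (Fin.tail u i))‖
        ≤ (lebesgueConst ξ)^n * M := by
      intro t ht
      have hφt : phiAB (A 0) (B 0) t ∈ Set.Icc (A 0) (B 0) := phiAB_mem (hAB 0) ht
      refine IH (Fin.tail A) (Fin.tail B) (fun i => hAB i.succ)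
        (fun v => G (Fin.cons (phiAB (A 0) (B 0) t) v)) ?_ M hM ?_ (Fin.tail u) htail
      · exact Gcont.comp (continuous_cons_right _).continuousOn
          (fun v hv => cons_mem_boxSet hφt hv)
      · exact fun v hv => hGM _ (cons_mem_boxSet hφt hv)
    have hcont : ContinuousOn (fun t => ∑ ν' : Fin n → Fin (m+1),
        G (Fin.cons (phiAB (A 0) (B 0) t) (xiPoint ξ (Fin.tail A) (Fin.tail B) ν')) *
        ∏ i, lagrangeC ξ (ν' i) (phiInvAB (Fin.tail A i) (Fin.tail B i) (Fin.tail u i)))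
        (Set.Icc (-1:ℝ) 1) := by
      refine continuousOn_finset_sum _ fun ν' _ => ContinuousOn.mul ?_ continuousOn_const
      refine Gcont.comp (continuous_consPhi A B _).continuousOn fun t ht => ?_
      exact cons_mem_boxSet (phiAB_mem (hAB 0) ht)
        (xiPoint_mem_boxSet ξ hξ (fun i => hAB i.succ) ν')
    have := interp_abs_le ξ hξ hinj _ hcont (by positivity) key hs₀
    calc ‖interpC ξ _ (phiInvAB (A 0) (B 0) (u 0))‖
        ≤ lebesgueConst ξ * ((lebesgueConst ξ)^n * M) := this
      _ = (lebesgueConst ξ)^(n+1) * M := by ring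
end Induction
section ErrInduction
variable {m : ℕ}

lemma tensor_err (ξ : Fin (m+1) → ℝ) (hξ : ∀ ν, ξ ν ∈ Set.Icc (-1:ℝ) 1)
    (hinj : Function.Injective ξ) (ε : ℝ) (hε : 0 ≤ ε) :
    ∀ (n : ℕ) (A B : Fin n → ℝ), (∀ ι, A ι ≤ B ι) →
      ∀ (H : (Fin n → ℝ) → ℂ), ContinuousOn H (boxSet A B) →
      (∀ (ι : Fin n) (u : Fin n → ℝ), u ∈ boxSet A B → ∀ t ∈ Set.Icc (-1:ℝ) 1,
        ‖H (Function.update u ι (phiAB (A ι) (B ι) t)) -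
          interpC ξ (fun s => H (Function.update u ι (phiAB (A ι) (B ι) s))) t‖ ≤ ε) →
      ∀ u ∈ boxSet A B,
      ‖H u - ∑ ν : Fin n → Fin (m+1), H (xiPoint ξ A B ν) *
          ∏ ι, lagrangeC ξ (ν ι) (phiInvAB (A ι) (B ι) (u ι))‖
        ≤ (∑ k ∈ Finset.range n, (lebesgueConst ξ)^k) * ε := by
  intro n
  induction n with
  | zero =>
    intro A B _ H _ _ u hu
    have h1 : ∀ ν : Fin 0 → Fin (m+1), xiPoint ξ A B ν = u := fun ν => Subsingleton.elim _ _
    simp [h1]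
  | succ n IH =>
    intro A B hAB H Hcont hsl u hu
    have hΛ1 : 1 ≤ lebesgueConst ξ := one_le_lebesgueConst ξ hξ hinj
    have hΛ0 : 0 ≤ lebesgueConst ξ := le_trans zero_le_one hΛ1
    have hCn : 0 ≤ ∑ k ∈ Finset.range n, (lebesgueConst ξ)^k :=
      Finset.sum_nonneg fun k _ => pow_nonneg hΛ0 k
    set Λ := lebesgueConst ξ with hΛdef
    have hs₀ : phiInvAB (A 0) (B 0) (u 0) ∈ Set.Icc (-1:ℝ) 1 := phiInvAB_mem (hAB 0) (hu 0)
    have htail : Fin.tail u ∈ boxSet (Fin.tail A) (Fin.tail B) := tail_mem_boxSet hu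
    have hu0 : phiAB (A 0) (B 0) (phiInvAB (A 0) (B 0) (u 0)) = u 0 :=
      phiAB_phiInvAB (hAB 0) (hu 0)
    rw [tensor_split]
    set g₀ : ℝ → ℂ := fun t => H (Function.update u 0 (phiAB (A 0) (B 0) t)) with hg₀
    set f : ℝ → ℂ := fun t => ∑ ν' : Fin n → Fin (m+1),
        H (Fin.cons (phiAB (A 0) (B 0) t) (xiPoint ξ (Fin.tail A) (Fin.tail B) ν')) *
        ∏ i, lagrangeC ξ (ν' i) (phiInvAB (Fin.tail A i) (Fin.tail B i) (Fin.tail u i)) with hf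
    have hHu : H u = g₀ (phiInvAB (A 0) (B 0) (u 0)) := by
      rw [hg₀]; simp only [hu0, Function.update_eq_self]
    have hdecomp : H u - interpC ξ f (phiInvAB (A 0) (B 0) (u 0)) =
        (g₀ (phiInvAB (A 0) (B 0) (u 0)) - interpC ξ g₀ (phiInvAB (A 0) (B 0) (u 0))) +
        interpC ξ (fun s => g₀ s - f s) (phiInvAB (A 0) (B 0) (u 0)) := by
      rw [interpC_sub, hHu]; ring
    rw [hdecomp]
    refine le_trans (norm_add_le _ _) ?_
    have term1 : ‖g₀ (phiInvAB (A 0) (B 0) (u 0)) -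
        interpC ξ g₀ (phiInvAB (A 0) (B 0) (u 0))‖ ≤ ε := hsl 0 u hu _ hs₀
    -- pointwise bound on g₀ - f via IH
    have key : ∀ t ∈ Set.Icc (-1:ℝ) 1,
        ‖g₀ t - f t‖ ≤ (∑ k ∈ Finset.range n, Λ^k) * ε := by
      intro t ht
      have hφt : phiAB (A 0) (B 0) t ∈ Set.Icc (A 0) (B 0) := phiAB_mem (hAB 0) ht
      have hg₀t : g₀ t = H (Fin.cons (phiAB (A 0) (B 0) t) (Fin.tail u)) := by
        show H (Function.update u 0 (phiAB (A 0) (B 0) t)) = _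
        rw [update_zero_eq_cons]
      rw [hg₀t, hf]
      refine IH (Fin.tail A) (Fin.tail B) (fun i => hAB i.succ)
        (fun v => H (Fin.cons (phiAB (A 0) (B 0) t) v)) ?_ ?_ (Fin.tail u) htail
      · exact Hcont.comp (continuous_cons_right _).continuousOn
          (fun v hv => cons_mem_boxSet hφt hv)
      · intro i v hv t' ht'
        have hmem : Fin.cons (phiAB (A 0) (B 0) t) v ∈ boxSet A B := cons_mem_boxSet hφt hv
        have := hsl i.succ _ hmem t' ht'
        simpa only [Fin.cons_update, Fin.tail] using this
    have hcontg₀ : ContinuousOn g₀ (Set.Icc (-1:ℝ) 1) := by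
      rw [hg₀]
      refine Hcont.comp (continuous_updatePhi A B u 0).continuousOn fun t ht => ?_
      exact update_mem_boxSet hu (phiAB_mem (hAB 0) ht)
    have hcontf : ContinuousOn f (Set.Icc (-1:ℝ) 1) := by
      rw [hf]
      refine continuousOn_finset_sum _ fun ν' _ => ContinuousOn.mul ?_ continuousOn_const
      refine Hcont.comp (continuous_consPhi A B _).continuousOn fun t ht => ?_
      exact cons_mem_boxSet (phiAB_mem (hAB 0) ht)
        (xiPoint_mem_boxSet ξ hξ (fun i => hAB i.succ) ν')
    have term2 : ‖interpC ξ (fun s => g₀ s - f s) (phiInvAB (A 0) (B 0) (u 0))‖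
        ≤ Λ * ((∑ k ∈ Finset.range n, Λ^k) * ε) :=
      interp_abs_le ξ hξ hinj _ (hcontg₀.sub hcontf) (mul_nonneg hCn hε) key hs₀
    have hgeom : (∑ k ∈ Finset.range (n+1), Λ^k) = Λ * (∑ k ∈ Finset.range n, Λ^k) + 1 :=
      geom_sum_succ
    calc ‖_‖ + ‖_‖ ≤ ε + Λ * ((∑ k ∈ Finset.range n, Λ^k) * ε) :=
          add_le_add term1 term2
      _ = (∑ k ∈ Finset.range (n+1), Λ^k) * ε := by rw [hgeom]; ring
end ErrInduction
section Kernel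

lemma euclNorm_nonneg {n : ℕ} (x : Fin n → ℝ) : 0 ≤ euclNorm x := Real.sqrt_nonneg _

lemma continuous_euclNorm {n : ℕ} : Continuous (euclNorm (n := n)) :=
  Real.continuous_sqrt.comp (continuous_finset_sum _ fun j _ => (continuous_apply j).pow 2)

lemma euclNorm_single {n : ℕ} (ι : Fin n) (v : ℝ) :
    euclNorm (fun j => if j = ι then v else 0) = |v| := by
  rw [euclNorm]
  have : ∀ j, (if j = ι then v else 0)^2 = if j = ι then v^2 else 0 := by
    intro j; split <;> simp
  simp only [this, Finset.sum_ite_eq' Finset.univ ι (fun _ => v^2), Finset.mem_univ, if_true]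
  exact Real.sqrt_sq_eq_abs v

lemma euclSetDist_le {n : ℕ} (s t : Set (Fin n → ℝ)) {x y : Fin n → ℝ}
    (hx : x ∈ s) (hy : y ∈ t) : euclSetDist s t ≤ euclNorm (x - y) := by
  refine csInf_le ⟨0, ?_⟩ ⟨x, hx, y, hy, rfl⟩
  rintro r ⟨x', _, y', _, rfl⟩; exact euclNorm_nonneg _

lemma le_euclDiam_box {n : ℕ} (a b : Fin n → ℝ) (hab : ∀ i, a i ≤ b i)
    {u : Fin n → ℝ} (hu : u ∈ boxSet a b) (ι : Fin n) :
    b ι - a ι ≤ euclDiam (boxSet a b) := by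
  have hbdd : BddAbove {r : ℝ | ∃ x ∈ boxSet a b, ∃ y ∈ boxSet a b, r = euclNorm (x - y)} := by
    refine ⟨euclNorm (fun j => b j - a j), ?_⟩
    rintro r ⟨x, hx, y, hy, rfl⟩
    rw [euclNorm, euclNorm]
    refine Real.sqrt_le_sqrt (Finset.sum_le_sum fun j _ => ?_)
    have h1 := (hx j).1; have h2 := (hx j).2; have h3 := (hy j).1; have h4 := (hy j).2
    have : ((x - y) j) = x j - y j := rfl
    rw [this]
    nlinarith
  have hmem : b ι - a ι ∈ {r : ℝ | ∃ x ∈ boxSet a b, ∃ y ∈ boxSet a b, r = euclNorm (x - y)} := by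
    refine ⟨Function.update u ι (b ι), update_mem_boxSet hu ⟨hab ι, le_refl _⟩,
      Function.update u ι (a ι), update_mem_boxSet hu ⟨le_refl _, hab ι⟩, ?_⟩
    have heq : (Function.update u ι (b ι) - Function.update u ι (a ι)) =
        fun j => if j = ι then b ι - a ι else 0 := by
      funext j
      rcases eq_or_ne j ι with rfl | hj
      · simp [Pi.sub_apply]
      · simp [Pi.sub_apply, Function.update_apply, hj]
    rw [heq, euclNorm_single, _root_.abs_of_nonneg (by linarith [hab ι])]
  exact le_csSup hbdd hmem

/-- The directionally modified kernel as a function of the difference `w = x - y`. -/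
noncomputable def Hker (κ : ℝ) (c : Fin 3 → ℝ) (w : Fin 3 → ℝ) : ℂ :=
  Complex.exp (Complex.I * (κ : ℂ) * ((euclNorm w - ∑ j, w j * c j : ℝ) : ℂ)) /
    (4 * (Real.pi : ℂ) * (euclNorm w : ℂ))

lemma helmholtz3Dc_eq (κ : ℝ) (c : Fin 3 → ℝ) (x y : Fin 3 → ℝ) :
    helmholtz3Dc κ c x y = Hker κ c (x - y) := by
  rw [helmholtz3Dc, helmholtz3D, Hker, div_mul_eq_mul_div, ← Complex.exp_add]
  congr 2
  simp only [Pi.sub_apply]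
  push_cast
  ring

lemma contOn_Hker (κ : ℝ) (c : Fin 3 → ℝ) :
    ContinuousOn (Hker κ c) {w : Fin 3 → ℝ | euclNorm w ≠ 0} := by
  have h1 : Continuous fun w : Fin 3 → ℝ => ((euclNorm w - ∑ j, w j * c j : ℝ) : ℂ) :=
    Complex.continuous_ofReal.comp (continuous_euclNorm.sub
      (continuous_finset_sum _ fun j _ => (continuous_apply j).mul continuous_const))
  refine ContinuousOn.div ((Complex.continuous_exp.comp (continuous_const.mul h1)).continuousOn)
    ((continuous_const.mul (Complex.continuous_ofReal.comp continuous_euclNorm)).continuousOn)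
    fun w hw => ?_
  simp only [Set.mem_setOf_eq] at hw
  have h4 : (4 : ℂ) * (Real.pi : ℂ) ≠ 0 := by
    simp [Real.pi_ne_zero]
  exact mul_ne_zero h4 (by exact_mod_cast hw)

lemma helmholtz3D_eq (κ : ℝ) (c : Fin 3 → ℝ) (x y : Fin 3 → ℝ) :
    helmholtz3D κ x y = Complex.exp (Complex.I * (κ : ℂ) * ((∑ j, (x j - y j) * c j : ℝ) : ℂ)) *
      helmholtz3Dc κ c x y := by
  rw [helmholtz3Dc, mul_comm (helmholtz3D κ x y), ← mul_assoc, ← Complex.exp_add]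
  simp

end Kernel
set_option maxHeartbeats 1000000
/-- univariate formulation for `g`: if all the univariate functions
`g_dp` are interpolated with accuracy `ε` on `[−1,1]`, then the directional
approximation error satisfies `‖g − g̃_{τσ}‖_{∞,τ×σ} ≤ 6 Λ_m⁵ ε`. -/
theorem stmt12 (ε κ : ℝ) (hε : 0 ≤ ε) (hκ : 0 ≤ κ) (c : Fin 3 → ℝ)
    (m : ℕ) (ξ : Fin (m + 1) → ℝ)
    (hξ : ∀ ν, ξ ν ∈ Set.Icc (-1 : ℝ) 1) (hinj : Function.Injective ξ)
    (aτ bτ aσ bσ : Fin 3 → ℝ) (haτ : ∀ ι, aτ ι ≤ bτ ι) (haσ : ∀ ι, aσ ι ≤ bσ ι)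
    (τ σ : Set (Fin 3 → ℝ)) (hτ : τ = boxSet aτ bτ) (hσ : σ = boxSet aσ bσ)
    (hdist : 0 < euclSetDist τ σ)
    (hunivariate : ∀ d p : Fin 3 → ℝ,
      2 * euclNorm p ≤ max (euclDiam τ) (euclDiam σ) →
      (∀ t ∈ Set.Icc (-1 : ℝ) 1, ∃ x ∈ τ, ∃ y ∈ σ, d - t • p = x - y) →
      supNormOn (fun t =>
          Complex.exp (Complex.I * (κ : ℂ) *
              ((euclNorm (d - t • p) - ∑ j, (d j - t * p j) * c j : ℝ) : ℂ)) /
              (4 * (Real.pi : ℂ) * (euclNorm (d - t • p) : ℂ)) -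
          interpC ξ (fun s =>
            Complex.exp (Complex.I * (κ : ℂ) *
              ((euclNorm (d - s • p) - ∑ j, (d j - s * p j) * c j : ℝ) : ℂ)) /
              (4 * (Real.pi : ℂ) * (euclNorm (d - s • p) : ℂ))) t)
        (Set.Icc (-1) 1) ≤ ε) :
    ∀ x ∈ τ, ∀ y ∈ σ,
      ‖helmholtz3D κ x y - gTilde m ξ κ c aτ bτ aσ bσ x y‖ ≤
        6 * (lebesgueConst ξ) ^ 5 * ε := by

  subst hτ hσ
  intro x hx y hy
  have hΛ1 : 1 ≤ lebesgueConst ξ := one_le_lebesgueConst ξ hξ hinj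
  have hΛ0 : 0 ≤ lebesgueConst ξ := le_trans zero_le_one hΛ1
  have hpos : ∀ x' ∈ boxSet aτ bτ, ∀ y' ∈ boxSet aσ bσ, 0 < euclNorm (x' - y') :=
    fun x' hx' y' hy' => lt_of_lt_of_le hdist (euclSetDist_le _ _ hx' hy')
  -- continuity of the modified kernel in each variable
  have hcontL : ∀ y' ∈ boxSet aσ bσ,
      ContinuousOn (fun x' => helmholtz3Dc κ c x' y') (boxSet aτ bτ) := by
    intro y' hy'
    have heq : (fun x' => helmholtz3Dc κ c x' y') = (Hker κ c) ∘ (fun x' => x' - y') := by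
      funext x'; exact helmholtz3Dc_eq κ c x' y'
    rw [heq]
    exact (contOn_Hker κ c).comp (continuous_id.sub continuous_const).continuousOn
      (fun x' hx' => (hpos x' hx' y' hy').ne')
  have hcontR : ∀ x' ∈ boxSet aτ bτ,
      ContinuousOn (fun y' => helmholtz3Dc κ c x' y') (boxSet aσ bσ) := by
    intro x' hx'
    have heq : (fun y' => helmholtz3Dc κ c x' y') = (Hker κ c) ∘ (fun y' => x' - y') := by
      funext y'; exact helmholtz3Dc_eq κ c x' y'
    rw [heq]
    exact (contOn_Hker κ c).comp (continuous_const.sub continuous_id).continuousOn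
      (fun y' hy' => (hpos x' hx' y' hy').ne')
  -- pointwise univariate bound, derived from `hunivariate`
  have hpoint : ∀ d p : Fin 3 → ℝ,
      2 * euclNorm p ≤ max (euclDiam (boxSet aτ bτ)) (euclDiam (boxSet aσ bσ)) →
      (∀ t ∈ Set.Icc (-1:ℝ) 1, ∃ x' ∈ boxSet aτ bτ, ∃ y' ∈ boxSet aσ bσ, d - t • p = x' - y') →
      ∀ t ∈ Set.Icc (-1:ℝ) 1,
        ‖Hker κ c (d - t • p) - interpC ξ (fun s => Hker κ c (d - s • p)) t‖ ≤ ε := by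
    intro d p h1 h2 t ht
    have hfn : (fun t : ℝ =>
        Complex.exp (Complex.I * (κ : ℂ) *
            ((euclNorm (d - t • p) - ∑ j, (d j - t * p j) * c j : ℝ) : ℂ)) /
            (4 * (Real.pi : ℂ) * ((euclNorm (d - t • p) : ℝ) : ℂ))) =
        fun t => Hker κ c (d - t • p) := by
      funext s
      rw [Hker]
      simp only [Pi.sub_apply, Pi.smul_apply, smul_eq_mul]
    have hsup := hunivariate d p h1 h2
    rw [hfn] at hsup
    have hlinecont : Continuous (fun t : ℝ => d - t • p) :=
      continuous_const.sub (continuous_id.smul continuous_const)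
    have hcontline : ContinuousOn (fun t : ℝ => Hker κ c (d - t • p) -
        interpC ξ (fun s => Hker κ c (d - s • p)) t) (Set.Icc (-1:ℝ) 1) := by
      refine ContinuousOn.sub ?_ (continuous_interpC ξ _).continuousOn
      refine (contOn_Hker κ c).comp hlinecont.continuousOn fun t' ht' => ?_
      obtain ⟨x', hx', y', hy', heq⟩ := h2 t' ht'
      rw [Set.mem_setOf_eq, heq]
      exact (hpos x' hx' y' hy').ne'
    exact le_trans (supNormOn_ge _ hcontline ht) hsup
  -- slice bounds in the x-variables
  have hslx : ∀ y' ∈ boxSet aσ bσ, ∀ (ι : Fin 3) (u : Fin 3 → ℝ), u ∈ boxSet aτ bτ →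
      ∀ t ∈ Set.Icc (-1:ℝ) 1,
      ‖helmholtz3Dc κ c (Function.update u ι (phiAB (aτ ι) (bτ ι) t)) y' -
        interpC ξ (fun s => helmholtz3Dc κ c (Function.update u ι (phiAB (aτ ι) (bτ ι) s)) y') t‖
        ≤ ε := by
    intro y' hy' ι u hu t ht
    set d : Fin 3 → ℝ := fun j => Function.update u ι ((bτ ι + aτ ι)/2) j - y' j with hd
    set p : Fin 3 → ℝ := fun j => if j = ι then -((bτ ι - aτ ι)/2) else 0 with hp
    have hW : ∀ s : ℝ, Function.update u ι (phiAB (aτ ι) (bτ ι) s) - y' = d - s • p := by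
      intro s; funext j
      simp only [Pi.sub_apply, Pi.smul_apply, smul_eq_mul, hd, hp]
      rcases eq_or_ne j ι with rfl | hj
      · simp only [Function.update_self, if_true, phiAB]; ring
      · simp [Function.update_apply, hj]
    have hnp : euclNorm p = (bτ ι - aτ ι)/2 := by
      rw [hp, euclNorm_single, abs_neg, _root_.abs_of_nonneg (by linarith [haτ ι])]
    have h1 : 2 * euclNorm p ≤ max (euclDiam (boxSet aτ bτ)) (euclDiam (boxSet aσ bσ)) := by
      rw [hnp]
      refine le_trans ?_ (le_max_left _ _)
      have := le_euclDiam_box aτ bτ haτ hu ι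
      linarith
    have h2 : ∀ s ∈ Set.Icc (-1:ℝ) 1, ∃ x' ∈ boxSet aτ bτ, ∃ y'' ∈ boxSet aσ bσ,
        d - s • p = x' - y'' :=
      fun s hs => ⟨Function.update u ι (phiAB (aτ ι) (bτ ι) s),
        update_mem_boxSet hu (phiAB_mem (haτ ι) hs), y', hy', (hW s).symm⟩
    have h := hpoint d p h1 h2 t ht
    have hfn2 : (fun s : ℝ => helmholtz3Dc κ c (Function.update u ι (phiAB (aτ ι) (bτ ι) s)) y')
        = fun s => Hker κ c (d - s • p) := by
      funext s; rw [helmholtz3Dc_eq, hW s]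
    calc ‖helmholtz3Dc κ c (Function.update u ι (phiAB (aτ ι) (bτ ι) t)) y' -
          interpC ξ (fun s => helmholtz3Dc κ c (Function.update u ι (phiAB (aτ ι) (bτ ι) s)) y') t‖
        = ‖Hker κ c (d - t • p) - interpC ξ (fun s => Hker κ c (d - s • p)) t‖ := by
          rw [helmholtz3Dc_eq, hW t, hfn2]
      _ ≤ ε := h
  -- slice bounds in the y-variables
  have hsly : ∀ x' ∈ boxSet aτ bτ, ∀ (ι : Fin 3) (u : Fin 3 → ℝ), u ∈ boxSet aσ bσ →
      ∀ t ∈ Set.Icc (-1:ℝ) 1,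
      ‖helmholtz3Dc κ c x' (Function.update u ι (phiAB (aσ ι) (bσ ι) t)) -
        interpC ξ (fun s => helmholtz3Dc κ c x' (Function.update u ι (phiAB (aσ ι) (bσ ι) s))) t‖
        ≤ ε := by
    intro x' hx' ι u hu t ht
    set d : Fin 3 → ℝ := fun j => x' j - Function.update u ι ((bσ ι + aσ ι)/2) j with hd
    set p : Fin 3 → ℝ := fun j => if j = ι then (bσ ι - aσ ι)/2 else 0 with hp
    have hW : ∀ s : ℝ, x' - Function.update u ι (phiAB (aσ ι) (bσ ι) s) = d - s • p := by
      intro s; funext j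
      simp only [Pi.sub_apply, Pi.smul_apply, smul_eq_mul, hd, hp]
      rcases eq_or_ne j ι with rfl | hj
      · simp only [Function.update_self, if_true, phiAB]; ring
      · simp [Function.update_apply, hj]
    have hnp : euclNorm p = (bσ ι - aσ ι)/2 := by
      rw [hp, euclNorm_single, _root_.abs_of_nonneg (by linarith [haσ ι])]
    have h1 : 2 * euclNorm p ≤ max (euclDiam (boxSet aτ bτ)) (euclDiam (boxSet aσ bσ)) := by
      rw [hnp]
      refine le_trans ?_ (le_max_right _ _)
      have := le_euclDiam_box aσ bσ haσ hu ι
      linarith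
    have h2 : ∀ s ∈ Set.Icc (-1:ℝ) 1, ∃ x'' ∈ boxSet aτ bτ, ∃ y'' ∈ boxSet aσ bσ,
        d - s • p = x'' - y'' :=
      fun s hs => ⟨x', hx', Function.update u ι (phiAB (aσ ι) (bσ ι) s),
        update_mem_boxSet hu (phiAB_mem (haσ ι) hs), (hW s).symm⟩
    have h := hpoint d p h1 h2 t ht
    have hfn2 : (fun s : ℝ => helmholtz3Dc κ c x' (Function.update u ι (phiAB (aσ ι) (bσ ι) s)))
        = fun s => Hker κ c (d - s • p) := by
      funext s; rw [helmholtz3Dc_eq, hW s]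
    calc ‖helmholtz3Dc κ c x' (Function.update u ι (phiAB (aσ ι) (bσ ι) t)) -
          interpC ξ (fun s => helmholtz3Dc κ c x' (Function.update u ι (phiAB (aσ ι) (bσ ι) s))) t‖
        = ‖Hker κ c (d - t • p) - interpC ξ (fun s => Hker κ c (d - s • p)) t‖ := by
          rw [helmholtz3Dc_eq, hW t, hfn2]
      _ ≤ ε := h
  set Λ := lebesgueConst ξ with hΛdef
  set C₃ : ℝ := ∑ k ∈ Finset.range 3, Λ^k with hC₃
  have hC₃nn : 0 ≤ C₃ := Finset.sum_nonneg fun k _ => pow_nonneg hΛ0 k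
  -- error of interpolation in the y-variables, for every x' in the box
  have erry : ∀ x' ∈ boxSet aτ bτ,
      ‖helmholtz3Dc κ c x' y - ∑ μ : Fin 3 → Fin (m+1),
        helmholtz3Dc κ c x' (xiPoint ξ aσ bσ μ) *
        ∏ i, lagrangeC ξ (μ i) (phiInvAB (aσ i) (bσ i) (y i))‖ ≤ C₃ * ε := by
    intro x' hx'
    exact tensor_err ξ hξ hinj ε hε 3 aσ bσ haσ (fun y' => helmholtz3Dc κ c x' y')
      (hcontR x' hx') (hsly x' hx') y hy
  -- error of interpolation in the x-variables, at the fixed y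
  have errx : ‖helmholtz3Dc κ c x y - ∑ ν : Fin 3 → Fin (m+1),
      helmholtz3Dc κ c (xiPoint ξ aτ bτ ν) y *
      ∏ ι, lagrangeC ξ (ν ι) (phiInvAB (aτ ι) (bτ ι) (x ι))‖ ≤ C₃ * ε :=
    tensor_err ξ hξ hinj ε hε 3 aτ bτ haτ (fun x' => helmholtz3Dc κ c x' y)
      (hcontL y hy) (hslx y hy) x hx
  -- stability applied to the y-error as function of x'
  set G : (Fin 3 → ℝ) → ℂ := fun x' => helmholtz3Dc κ c x' y - ∑ μ : Fin 3 → Fin (m+1),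
      helmholtz3Dc κ c x' (xiPoint ξ aσ bσ μ) *
      ∏ i, lagrangeC ξ (μ i) (phiInvAB (aσ i) (bσ i) (y i)) with hG
  have hGcont : ContinuousOn G (boxSet aτ bτ) := by
    rw [hG]
    refine ContinuousOn.sub (hcontL y hy) ?_
    refine continuousOn_finset_sum _ fun μ _ => ContinuousOn.mul ?_ continuousOn_const
    exact hcontL (xiPoint ξ aσ bσ μ) (xiPoint_mem_boxSet ξ hξ haσ μ)
  have stab : ‖∑ ν : Fin 3 → Fin (m+1), G (xiPoint ξ aτ bτ ν) *
      ∏ ι, lagrangeC ξ (ν ι) (phiInvAB (aτ ι) (bτ ι) (x ι))‖ ≤ Λ^3 * (C₃ * ε) :=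
    tensor_stab ξ hξ hinj 3 aτ bτ haτ G hGcont (C₃ * ε) (mul_nonneg hC₃nn hε) erry x hx
  -- algebraic decomposition
  set S : ℂ := ∑ ν : Fin 3 → Fin (m+1), ∑ μ : Fin 3 → Fin (m+1),
      helmholtz3Dc κ c (xiPoint ξ aτ bτ ν) (xiPoint ξ aσ bσ μ) *
        lagTensor ξ aτ bτ ν x * lagTensor ξ aσ bσ μ y with hS
  have hdecomp : helmholtz3Dc κ c x y - S =
      (helmholtz3Dc κ c x y - ∑ ν : Fin 3 → Fin (m+1),
        helmholtz3Dc κ c (xiPoint ξ aτ bτ ν) y *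
        ∏ ι, lagrangeC ξ (ν ι) (phiInvAB (aτ ι) (bτ ι) (x ι))) +
      (∑ ν : Fin 3 → Fin (m+1), G (xiPoint ξ aτ bτ ν) *
        ∏ ι, lagrangeC ξ (ν ι) (phiInvAB (aτ ι) (bτ ι) (x ι))) := by
    have hsplit : (∑ ν : Fin 3 → Fin (m+1), G (xiPoint ξ aτ bτ ν) *
        ∏ ι, lagrangeC ξ (ν ι) (phiInvAB (aτ ι) (bτ ι) (x ι)))
        = (∑ ν : Fin 3 → Fin (m+1), helmholtz3Dc κ c (xiPoint ξ aτ bτ ν) y *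
            ∏ ι, lagrangeC ξ (ν ι) (phiInvAB (aτ ι) (bτ ι) (x ι))) - S := by
      rw [hS, hG, ← Finset.sum_sub_distrib]
      refine Finset.sum_congr rfl fun ν _ => ?_
      rw [sub_mul, Finset.sum_mul]
      congr 1
      refine Finset.sum_congr rfl fun μ _ => ?_
      simp only [lagTensor]
      ring
    rw [hsplit]; ring
  have hmain : ‖helmholtz3Dc κ c x y - S‖ ≤ C₃ * ε + Λ^3 * (C₃ * ε) := by
    rw [hdecomp]
    exact le_trans (norm_add_le _ _) (add_le_add errx stab)
  -- reassemble with the plane wave factor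
  have habs1 : ‖Complex.exp (Complex.I * (κ : ℂ) *
      ((∑ j, (x j - y j) * c j : ℝ) : ℂ))‖ = 1 := by
    rw [Complex.norm_exp]
    simp [Complex.mul_re]
  have hgoal : helmholtz3D κ x y - gTilde m ξ κ c aτ bτ aσ bσ x y =
      Complex.exp (Complex.I * (κ : ℂ) * ((∑ j, (x j - y j) * c j : ℝ) : ℂ)) *
        (helmholtz3Dc κ c x y - S) := by
    rw [helmholtz3D_eq κ c, gTilde, hS, mul_sub]
  rw [hgoal, norm_mul, habs1, one_mul]
  -- numerics
  have hC₃' : C₃ = 1 + Λ + Λ^2 := by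
    rw [hC₃]
    simp [Finset.sum_range_succ]
  have h0 : Λ^0 ≤ Λ^5 := pow_le_pow_right₀ hΛ1 (by norm_num)
  have h1 : Λ^1 ≤ Λ^5 := pow_le_pow_right₀ hΛ1 (by norm_num)
  have h2 : Λ^2 ≤ Λ^5 := pow_le_pow_right₀ hΛ1 (by norm_num)
  have h3 : Λ^3 ≤ Λ^5 := pow_le_pow_right₀ hΛ1 (by norm_num)
  have h4 : Λ^4 ≤ Λ^5 := pow_le_pow_right₀ hΛ1 (by norm_num)
  have hsc : C₃ + Λ^3 * C₃ ≤ 6 * Λ^5 := by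
    have hexp : C₃ + Λ^3 * C₃ = Λ^0 + Λ^1 + Λ^2 + Λ^3 + Λ^4 + Λ^5 := by
      rw [hC₃']; ring
    rw [hexp]; linarith
  calc ‖helmholtz3Dc κ c x y - S‖ ≤ C₃ * ε + Λ^3 * (C₃ * ε) := hmain
    _ = (C₃ + Λ^3 * C₃) * ε := by ring
    _ ≤ 6 * Λ^5 * ε := mul_le_mul_of_nonneg_right hsc hε
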